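/- In the real Lie algebra su(n+1) of trace-free skew-Hermitian (n+1)×(n+1) complex matrices (n ≥ 2), let 𝔨 = {M ∈ su(n+1) : M_{1k} = M_{k1} = 0 for all k ≥ 2} and X = (1/2)(E₁₂ − E₂₁). Then {M ∈ 𝔨 : ⁅X, M⁆ = 0} = {M ∈ su(n+1) : M₁₁ = M₂₂ and M_{jk} = 0 whenever j ≠ k and at least one of j, k lies in {1, 2}}. -/

import Mathlib

open Matrix

private lemma std_mul_apply {m : ℕ} (i j a b : Fin m) (M : Matrix (Fin m) (Fin m) ℂ) :
    (single i j (1:ℂ) * M) a b = if a = i then M j b else 0 := by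
  simp [mul_apply, single, ite_and, eq_comm]

private lemma mul_std_apply {m : ℕ} (i j a b : Fin m) (M : Matrix (Fin m) (Fin m) ℂ) :
    (M * single i j (1:ℂ)) a b = if b = j then M a i else 0 := by
  simp [mul_apply, single, ite_and, eq_comm]

/-- Case 2 of Section 3.2 / equation (4.27): the centralizer of `X = (1/2)(E₁₂ − E₂₁)`
in the isotropy algebra `𝔨 = 𝔰(𝔲(1) ⊕ 𝔲(n)) ⊂ su(n+1)` consists of the matrices in
`su(n+1)` with equal first two diagonal entries and vanishing off-diagonal entries in
the first two rows and columns. -/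
theorem stmt_9 (n : ℕ) (hn : 2 ≤ n)
    (su k : Set (Matrix (Fin (n+1)) (Fin (n+1)) ℂ))
    (hsu : su = {M | Mᴴ = -M ∧ M.trace = 0})
    (hk : k = {M | M ∈ su ∧ ∀ j : Fin (n+1), 1 ≤ (j : ℕ) → M 0 j = 0 ∧ M j 0 = 0})
    (X : Matrix (Fin (n+1)) (Fin (n+1)) ℂ)
    (hX : X = (1/2 : ℂ) • (Matrix.single 0 1 1 - Matrix.single 1 0 1)) :
    {M | M ∈ k ∧ ⁅X, M⁆ = 0}
      = {M | M ∈ su ∧ M 0 0 = M 1 1 ∧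
          ∀ j l : Fin (n+1), j ≠ l → ((j : ℕ) < 2 ∨ (l : ℕ) < 2) → M j l = 0} := by
  obtain ⟨m, rfl⟩ : ∃ m, n = m + 2 := ⟨n - 2, by omega⟩
  subst hsu hk hX
  have h01 : (0 : Fin (m+2+1)) ≠ 1 := Fin.ne_of_val_ne (by simp)
  have hv0 : ((0 : Fin (m+2+1)) : ℕ) = 0 := rfl
  have hv1 : ((1 : Fin (m+2+1)) : ℕ) = 1 := rfl
  ext M
  simp only [Set.mem_setOf_eq]
  have key : ∀ a b : Fin (m+2+1), ⁅(1/2 : ℂ) • (Matrix.single (0 : Fin (m+2+1)) (1 : Fin (m+2+1)) (1:ℂ)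
        - Matrix.single (1 : Fin (m+2+1)) (0 : Fin (m+2+1)) (1:ℂ)), M⁆ a b
      = (1/2 : ℂ) * ((if a = 0 then M 1 b else 0) - (if a = 1 then M 0 b else 0)
          - (if b = 1 then M a 0 else 0) + (if b = 0 then M a 1 else 0)) := by
    intro a b
    simp only [Ring.lie_def, Matrix.sub_apply, Matrix.smul_apply, smul_mul_assoc,
      mul_smul_comm, Matrix.sub_mul, Matrix.mul_sub, smul_eq_mul,
      std_mul_apply, mul_std_apply]
    ring
  constructor
  · rintro ⟨⟨hMsu, hrow⟩, hb⟩
    have hbe : ∀ a b : Fin (m+2+1),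
        (if a = 0 then M 1 b else 0) - (if a = 1 then M 0 b else 0)
          - (if b = 1 then M a 0 else 0) + (if b = 0 then M a 1 else 0) = 0 := by
      intro a b
      have := congrFun (congrFun hb a) b
      rw [key a b] at this
      simpa using this
    refine ⟨hMsu, ?_, ?_⟩
    · have h := hbe 0 1
      rw [if_neg h01, if_neg h01.symm, if_pos rfl, if_pos rfl] at h
      linear_combination -h
    · intro j l hjl hlt
      have hj0 : j = 0 ∨ j = 1 ∨ 2 ≤ (j : ℕ) := by
        rcases Nat.lt_or_ge (j : ℕ) 2 with h | h
        · interval_cases h' : (j : ℕ)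
          · exact Or.inl (Fin.ext (by simp [h']))
          · exact Or.inr (Or.inl (Fin.ext (by simp [h'])))
        · exact Or.inr (Or.inr h)
      have hl0 : l = 0 ∨ l = 1 ∨ 2 ≤ (l : ℕ) := by
        rcases Nat.lt_or_ge (l : ℕ) 2 with h | h
        · interval_cases h' : (l : ℕ)
          · exact Or.inl (Fin.ext (by simp [h']))
          · exact Or.inr (Or.inl (Fin.ext (by simp [h'])))
        · exact Or.inr (Or.inr h)
      rcases hj0 with rfl | rfl | hj2
      · exact (hrow l (by
          rcases hl0 with rfl | rfl | h2
          · exact absurd rfl hjl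
          · simp
          · omega)).1
      · rcases hl0 with rfl | rfl | hl2
        · exact (hrow 1 (by simp)).2
        · exact absurd rfl hjl
        · have hl1 : l ≠ 1 := by intro h'; subst h'; rw [hv1] at hl2; omega
          have hl0' : l ≠ 0 := by intro h'; subst h'; rw [hv0] at hl2; omega
          have h := hbe 0 l
          rw [if_pos rfl, if_neg h01, if_neg hl1, if_neg hl0'] at h
          linear_combination h
      · rcases hl0 with rfl | rfl | hl2
        · exact (hrow j (by omega)).2
        · have hj1 : j ≠ 1 := by intro h'; subst h'; rw [hv1] at hj2; omega
          have hj0' : j ≠ 0 := by intro h'; subst h'; rw [hv0] at hj2; omega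
          have h := hbe j 0
          rw [if_neg hj0', if_neg hj1, if_neg h01, if_pos rfl] at h
          linear_combination h
        · omega
  · rintro ⟨hMsu, hdiag, hoff⟩
    have hA : ∀ b : Fin (m+2+1), b ≠ 1 → M 1 b = 0 := fun b h =>
      hoff 1 b (fun e => h e.symm) (Or.inl (by rw [hv1]; omega))
    have hB : ∀ b : Fin (m+2+1), b ≠ 0 → M 0 b = 0 := fun b h =>
      hoff 0 b (fun e => h e.symm) (Or.inl (by rw [hv0]; omega))
    have hC : ∀ a : Fin (m+2+1), a ≠ 0 → M a 0 = 0 := fun a h =>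
      hoff a 0 h (Or.inr (by rw [hv0]; omega))
    have hD : ∀ a : Fin (m+2+1), a ≠ 1 → M a 1 = 0 := fun a h =>
      hoff a 1 h (Or.inr (by rw [hv1]; omega))
    refine ⟨⟨hMsu, fun j hj => ⟨hB j (by intro h'; subst h'; rw [hv0] at hj; omega),
      hC j (by intro h'; subst h'; rw [hv0] at hj; omega)⟩⟩, ?_⟩
    ext a b
    rw [key a b]
    simp only [Matrix.zero_apply]
    have e1 : (if a = 0 then M 1 b else 0)
        = if a = 0 then (if b = 1 then M 1 1 else 0) else 0 := by
      split_ifs with p q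
      · rw [q]
      · exact hA b q
      · rfl
    have e2 : (if a = 1 then M 0 b else 0)
        = if a = 1 then (if b = 0 then M 0 0 else 0) else 0 := by
      split_ifs with p q
      · rw [q]
      · exact hB b q
      · rfl
    have e3 : (if b = 1 then M a 0 else 0)
        = if b = 1 then (if a = 0 then M 0 0 else 0) else 0 := by
      split_ifs with p q
      · rw [q]
      · exact hC a q
      · rfl
    have e4 : (if b = 0 then M a 1 else 0)
        = if b = 0 then (if a = 1 then M 1 1 else 0) else 0 := by
      split_ifs with p q
      · rw [q]
      · exact hD a q
      · rfl
    rw [e1, e2, e3, e4, hdiag]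
    split_ifs <;> ring
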